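/- arXiv:1007.1484 — 2 statements merged into one kernel-verified Lean document; each statement's English description precedes it below -/
import Mathlib

section
/- Let G be a finite directed flow network with terminals s and t, and suppose G is the 2-clique-sum at a vertex pair {u, v} of networks G_1 (containing s and t) and G_2. Let H_2 be any network with terminals u, v such that all min-cut values between nonempty complementary subsets of {u, v} agree with those of G_2 (with the terminals of G_2 being u, v). Then the maximum s–t flow value in G equals the maximum s–t flow value in the network obtained from G by replacing G_2 with H_2 (glued at u, v). -/
open Finset

/-- Capacity of the cut determined by vertex set `A`: total capacity of edges leaving `A`. -/
def cutCap {V : Type} [Fintype V] [DecidableEq V] (c : V → V → ℝ) (A : Finset V) : ℝ :=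
  ∑ u ∈ A, ∑ v ∈ Aᶜ, c u v

/-- Minimum capacity of a cut with all of `S` on the source side and all of `T` on the sink side. -/
noncomputable def minCut {V : Type} [Fintype V] [DecidableEq V] (c : V → V → ℝ) (S T : Finset V) : ℝ :=
  sInf {x : ℝ | ∃ A : Finset V, S ⊆ A ∧ Disjoint T A ∧ x = cutCap c A}

/-- Net outflow of `f` at vertex `v`. -/
def netOut {V : Type} [Fintype V] (f : V → V → ℝ) (v : V) : ℝ :=
  (∑ w, f v w) - ∑ w, f w v

/-- `f` is an external flow in the network with capacities `c`, terminals `q` and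
terminal net-outflow values `x`. -/
def IsExtFlow {V : Type} [Fintype V] {k : ℕ} (c f : V → V → ℝ) (q : Fin k → V)
    (x : Fin k → ℝ) : Prop :=
  (∀ u v, 0 ≤ f u v ∧ f u v ≤ c u v) ∧
  (∀ v, (∀ i, q i ≠ v) → netOut f v = 0) ∧
  (∀ i, netOut f (q i) = x i)

/-- Identification map for the 2-clique-sum: the two gluing vertices `u2, v2` of the
second network are identified with `u, v` of the first. -/
def glueMap {V1 V2 : Type} [DecidableEq V2] (u v : V1) (u2 v2 : V2) :
    V2 → V1 ⊕ {w : V2 // w ≠ u2 ∧ w ≠ v2} := fun w =>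
  if h1 : w = u2 then Sum.inl u
  else if h2 : w = v2 then Sum.inl v
  else Sum.inr ⟨w, h1, h2⟩

/-- Capacities of the 2-clique-sum of two networks at `{u,v} = {u2,v2}`. -/
def glueCap {V1 V2 : Type} [Fintype V2] [DecidableEq V1] [DecidableEq V2]
    (c1 : V1 → V1 → ℝ) (c2 : V2 → V2 → ℝ) (u v : V1) (u2 v2 : V2) :
    (V1 ⊕ {w : V2 // w ≠ u2 ∧ w ≠ v2}) → (V1 ⊕ {w : V2 // w ≠ u2 ∧ w ≠ v2}) → ℝ :=
  fun x y =>
    (match x, y with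
      | Sum.inl p, Sum.inl q => c1 p q
      | _, _ => 0) +
    ∑ w : V2, ∑ z : V2,
      if glueMap u v u2 v2 w = x ∧ glueMap u v u2 v2 z = y then c2 w z else 0

/-- Maximum value of a feasible `s`–`t` flow. -/
noncomputable def maxFlowVal {V : Type} [Fintype V] (c : V → V → ℝ) (s t : V) : ℝ :=
  sSup {F : ℝ | ∃ f : V → V → ℝ,
    (∀ u v, 0 ≤ f u v ∧ f u v ≤ c u v) ∧
    (∀ w, w ≠ s → w ≠ t → netOut f w = 0) ∧ netOut f s = F}


set_option linter.unusedSectionVars false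
set_option maxHeartbeats 1600000

namespace MFMC
variable {V : Type} [Fintype V] [DecidableEq V]

def Feasible (c f : V → V → ℝ) : Prop := ∀ u v, 0 ≤ f u v ∧ f u v ≤ c u v

def Conserves (f : V → V → ℝ) (s t : V) : Prop := ∀ w, w ≠ s → w ≠ t → netOut f w = 0

def AchSet (c : V → V → ℝ) (s t : V) : Set ℝ :=
  {F : ℝ | ∃ f : V → V → ℝ,
    (∀ u v, 0 ≤ f u v ∧ f u v ≤ c u v) ∧
    (∀ w, w ≠ s → w ≠ t → netOut f w = 0) ∧ netOut f s = F}

lemma mem_AchSet_iff {c : V → V → ℝ} {s t : V} {F : ℝ} :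
    F ∈ AchSet c s t ↔ ∃ f, Feasible c f ∧ Conserves f s t ∧ netOut f s = F := Iff.rfl

lemma sum_netOut (f : V → V → ℝ) : ∑ v, netOut f v = 0 := by
  simp only [netOut, Finset.sum_sub_distrib]
  rw [Finset.sum_comm]
  ring

lemma netOut_conserved_pair {f : V → V → ℝ} {s t : V} (h : Conserves f s t) (hst : s ≠ t) :
    netOut f t = - netOut f s := by
  have h0 := sum_netOut f
  have : ∑ v, netOut f v = netOut f s + netOut f t := by
    rw [← Finset.sum_subset (Finset.subset_univ {s, t})]
    · rw [Finset.sum_pair hst]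
    · intro x _ hx
      simp only [Finset.mem_insert, Finset.mem_singleton, not_or] at hx
      exact h x hx.1 hx.2
  linarith [this ▸ h0]

lemma sum_netOut_cut (f : V → V → ℝ) (A : Finset V) :
    ∑ v ∈ A, netOut f v = ∑ v ∈ A, ∑ w ∈ Aᶜ, (f v w - f w v) := by
  simp only [netOut]
  have h1 : ∀ v, (∑ w, f v w) = (∑ w ∈ A, f v w) + ∑ w ∈ Aᶜ, f v w := by
    intro v; rw [Finset.sum_add_sum_compl]
  have h2 : ∀ v, (∑ w, f w v) = (∑ w ∈ A, f w v) + ∑ w ∈ Aᶜ, f w v := by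
    intro v; rw [Finset.sum_add_sum_compl]
  simp only [h1, h2, Finset.sum_sub_distrib, Finset.sum_add_distrib]
  rw [Finset.sum_comm (s := A) (t := A) (f := fun v w => f v w)]
  ring

lemma netOut_eq_sum_cut {f : V → V → ℝ} {s t : V} (h : Conserves f s t) {A : Finset V}
    (hs : s ∈ A) (ht : t ∉ A) :
    netOut f s = ∑ v ∈ A, ∑ w ∈ Aᶜ, (f v w - f w v) := by
  rw [← sum_netOut_cut]
  rw [Finset.sum_eq_single_of_mem s hs]
  intro v hv hvs
  exact h v hvs (fun hvt => ht (hvt ▸ hv))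

lemma cutCap_nonneg {c : V → V → ℝ} (hc : ∀ a b, 0 ≤ c a b) (A : Finset V) :
    0 ≤ cutCap c A :=
  Finset.sum_nonneg fun _ _ => Finset.sum_nonneg fun _ _ => hc _ _

lemma weak_duality {c f : V → V → ℝ} {s t : V} (hf : Feasible c f) (h : Conserves f s t)
    {A : Finset V} (hs : s ∈ A) (ht : t ∉ A) :
    netOut f s ≤ cutCap c A := by
  rw [netOut_eq_sum_cut h hs ht]
  apply Finset.sum_le_sum
  intro v _
  apply Finset.sum_le_sum
  intro w _
  have := (hf v w).2
  have := (hf w v).1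
  linarith


lemma continuous_netOut (w : V) : Continuous (fun f : V → V → ℝ => netOut f w) := by
  unfold netOut
  apply Continuous.sub
  · exact continuous_finset_sum _ fun y _ => (continuous_apply y).comp (continuous_apply w)
  · exact continuous_finset_sum _ fun y _ => (continuous_apply w).comp (continuous_apply y)

lemma exists_max (c : V → V → ℝ) (hc : ∀ a b, 0 ≤ c a b) (s t : V) :
    ∃ f, Feasible c f ∧ Conserves f s t ∧
      IsGreatest (AchSet c s t) (netOut f s) := by
  classical
  set K : Set (V → V → ℝ) := {f | Feasible c f ∧ Conserves f s t} with hK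
  have hKeq : K = (Set.pi Set.univ fun a => Set.pi Set.univ fun b => Set.Icc 0 (c a b)) ∩
      (⋂ (w : V) (_ : w ≠ s) (_ : w ≠ t), {f | netOut f w = 0}) := by
    ext f
    simp only [hK, Set.mem_setOf_eq, Set.mem_inter_iff, Set.mem_pi, Set.mem_univ, true_implies,
      Set.mem_Icc, Set.mem_iInter, Feasible, Conserves, Set.mem_setOf_eq]
  have hcomp : IsCompact K := by
    rw [hKeq]
    apply IsCompact.inter_right
    · exact isCompact_univ_pi fun a => isCompact_univ_pi fun b => isCompact_Icc
    · apply isClosed_iInter; intro w; apply isClosed_iInter; intro _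
      apply isClosed_iInter; intro _
      exact isClosed_eq (continuous_netOut w) continuous_const
  have hne : K.Nonempty := by
    refine ⟨fun _ _ => 0, ⟨fun a b => ⟨le_refl _, hc a b⟩, ?_⟩⟩
    intro w _ _; simp [netOut]
  obtain ⟨f, hfK, hmax⟩ := hcomp.exists_isMaxOn hne ((continuous_netOut s).continuousOn)
  refine ⟨f, hfK.1, hfK.2, ⟨⟨f, hfK.1, hfK.2, rfl⟩, ?_⟩⟩
  rintro F ⟨g, hg1, hg2, rfl⟩
  exact hmax ⟨hg1, hg2⟩

lemma netOut_addEdge (g : V → V → ℝ) (b x' : V) (δ : ℝ) (w : V) :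
    netOut (fun a y => g a y + if a = b ∧ y = x' then δ else 0) w
      = netOut g w + ((if w = b then δ else 0) - (if w = x' then δ else 0)) := by
  unfold netOut
  rw [Finset.sum_add_distrib, Finset.sum_add_distrib]
  have h1 : (∑ y, if w = b ∧ y = x' then δ else 0) = if w = b then δ else 0 := by
    by_cases h : w = b <;> simp [h]
  have h2 : (∑ y, if y = b ∧ w = x' then δ else 0) = if w = x' then δ else 0 := by
    by_cases h : w = x' <;> simp [h]
  rw [h1, h2]; ring

lemma augment {c f : V → V → ℝ} (hf : Feasible c f) {s x : V}
    (hreach : Relation.ReflTransGen (fun a b => f a b < c a b ∨ 0 < f b a) s x) :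
    ∃ ε > 0, ∃ K ≥ (0:ℝ), ∀ δ, 0 < δ → δ ≤ ε → ∃ g, Feasible c g ∧
      (∀ a b, |g a b - f a b| ≤ K * δ) ∧
      ∀ w, netOut g w = netOut f w +
        δ * ((if w = s then 1 else 0) - (if w = x then 1 else 0)) := by
  classical
  induction hreach with
  | refl =>
      refine ⟨1, one_pos, 0, le_refl _, fun δ hδ hδ1 => ⟨f, hf, ?_, ?_⟩⟩
      · intro a b; simp
      · intro w; simp
  | tail hab hbc ih =>
      rename_i b x'
      obtain ⟨ε, hε, K, hK, hind⟩ := ih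
      rcases hbc with hlt | hpos
      · -- forward residual edge b → x'
        have hrpos : 0 < c b x' - f b x' := by linarith
        refine ⟨min ε ((c b x' - f b x') / (K + 1)), by positivity, K + 1, by linarith, ?_⟩
        intro δ hδ0 hδle
        obtain ⟨g, hgfeas, hgclose, hgnet⟩ := hind δ hδ0 (le_trans hδle (min_le_left _ _))
        have hδr : (K + 1) * δ ≤ c b x' - f b x' := by
          have h2 : δ ≤ (c b x' - f b x') / (K + 1) := le_trans hδle (min_le_right _ _)
          have h3 : (K + 1) * δ ≤ (K + 1) * ((c b x' - f b x') / (K + 1)) := by nlinarith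
          rwa [mul_div_cancel₀ _ (by linarith : K + (1:ℝ) ≠ 0)] at h3
        refine ⟨fun a y => g a y + if a = b ∧ y = x' then δ else 0, ?_, ?_, ?_⟩
        · intro a y
          dsimp only
          have h0 := (hgfeas a y).1
          have h1 := (hgfeas a y).2
          have h2 := abs_le.mp (hgclose a y)
          constructor
          · split_ifs <;> linarith
          · split_ifs with h
            · obtain ⟨rfl, rfl⟩ := h; linarith [h2.2]
            · linarith
        · intro a y
          dsimp only
          have h2 := abs_le.mp (hgclose a y)
          rw [abs_le]
          constructor <;> split_ifs <;> nlinarith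
        · intro w
          rw [netOut_addEdge, hgnet w]
          split_ifs <;> ring
      · -- backward residual edge: 0 < f x' b
        refine ⟨min ε (f x' b / (K + 1)), by positivity, K + 1, by linarith, ?_⟩
        intro δ hδ0 hδle
        obtain ⟨g, hgfeas, hgclose, hgnet⟩ := hind δ hδ0 (le_trans hδle (min_le_left _ _))
        have hδr : (K + 1) * δ ≤ f x' b := by
          have h2 : δ ≤ f x' b / (K + 1) := le_trans hδle (min_le_right _ _)
          have h3 : (K + 1) * δ ≤ (K + 1) * (f x' b / (K + 1)) := by nlinarith
          rwa [mul_div_cancel₀ _ (by linarith : K + (1:ℝ) ≠ 0)] at h3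
        refine ⟨fun a y => g a y + if a = x' ∧ y = b then -δ else 0, ?_, ?_, ?_⟩
        · intro a y
          dsimp only
          have h0 := (hgfeas a y).1
          have h1 := (hgfeas a y).2
          have h2 := abs_le.mp (hgclose a y)
          constructor
          · split_ifs with h
            · obtain ⟨rfl, rfl⟩ := h; linarith [h2.1]
            · linarith
          · split_ifs <;> linarith
        · intro a y
          dsimp only
          have h2 := abs_le.mp (hgclose a y)
          rw [abs_le]
          constructor <;> split_ifs <;> nlinarith
        · intro w
          rw [netOut_addEdge, hgnet w]
          split_ifs <;> ring

lemma minCut_le_cutCap {c : V → V → ℝ} (hc : ∀ a b, 0 ≤ c a b) {s t : V} {A : Finset V}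
    (hs : s ∈ A) (ht : t ∉ A) : minCut c {s} {t} ≤ cutCap c A := by
  apply csInf_le
  · refine ⟨0, ?_⟩
    rintro x ⟨B, _, _, rfl⟩
    exact cutCap_nonneg hc B
  · exact ⟨A, Finset.singleton_subset_iff.mpr hs, Finset.disjoint_singleton_left.mpr ht, rfl⟩

lemma le_minCut_of_forall {c : V → V → ℝ} {s t : V} (hst : s ≠ t) {F : ℝ}
    (h : ∀ A : Finset V, s ∈ A → t ∉ A → F ≤ cutCap c A) : F ≤ minCut c {s} {t} := by
  apply le_csInf
  · exact ⟨cutCap c {s}, ⟨{s}, le_refl _, by simp only [Finset.disjoint_singleton_left, Finset.mem_singleton]; exact Ne.symm hst, rfl⟩⟩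
  · rintro x ⟨A, hA1, hA2, rfl⟩
    exact h A (Finset.singleton_subset_iff.mp hA1) (Finset.disjoint_singleton_left.mp hA2)

/-- The max flow saturates some cut. -/
lemma maxflow_eq_cut {c f : V → V → ℝ} (hc : ∀ a b, 0 ≤ c a b)
    (hf : Feasible c f) (hcons : Conserves f s t) (hst : s ≠ t)
    (hmax : IsGreatest (AchSet c s t) (netOut f s)) :
    ∃ A : Finset V, s ∈ A ∧ t ∉ A ∧ netOut f s = cutCap c A := by
  classical
  set R : V → V → Prop := fun a b => f a b < c a b ∨ 0 < f b a with hR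
  set A : Finset V := Finset.univ.filter (fun x => Relation.ReflTransGen R s x) with hA
  have hsA : s ∈ A := by
    simp only [hA, Finset.mem_filter]
    exact ⟨Finset.mem_univ _, Relation.ReflTransGen.refl⟩
  have htA : t ∉ A := by
    intro ht
    simp only [hA, Finset.mem_filter] at ht
    obtain ⟨ε, hε, K, hK, haug⟩ := augment hf ht.2
    obtain ⟨g, hgfeas, _, hgnet⟩ := haug ε hε (le_refl _)
    have hgcons : Conserves g s t := by
      intro w hws hwt
      rw [hgnet w, hcons w hws hwt]
      simp [hws, hwt]
    have hgval : netOut g s = netOut f s + ε := by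
      rw [hgnet s]
      simp [hst]
    have := hmax.2 ⟨g, hgfeas, hgcons, rfl⟩
    rw [hgval] at this
    linarith
  refine ⟨A, hsA, htA, ?_⟩
  rw [netOut_eq_sum_cut hcons hsA htA]
  unfold cutCap
  apply Finset.sum_congr rfl
  intro a haA
  apply Finset.sum_congr rfl
  intro b hbA
  rw [Finset.mem_compl] at hbA
  have hnoedge : ¬ R a b := by
    intro hedge
    apply hbA
    simp only [hA, Finset.mem_filter] at haA ⊢
    exact ⟨Finset.mem_univ _, haA.2.tail hedge⟩
  rw [hR] at hnoedge
  have h1 : f a b = c a b :=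
    le_antisymm (hf a b).2 (le_of_not_gt fun hh => hnoedge (Or.inl hh))
  have h2 : f b a = 0 :=
    le_antisymm (le_of_not_gt fun hh => hnoedge (Or.inr hh)) (hf b a).1
  rw [h1, h2]; ring

lemma AchSet_eq_Icc {c : V → V → ℝ} (hc : ∀ a b, 0 ≤ c a b) {s t : V} (hst : s ≠ t) :
    AchSet c s t = Set.Icc (-(minCut c {t} {s})) (minCut c {s} {t}) := by
  ext F
  constructor
  · rintro ⟨f, hfeas, hcons, rfl⟩
    constructor
    · have hrev : netOut f t ≤ minCut c {t} {s} := by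
        apply le_minCut_of_forall (Ne.symm hst)
        intro A hA1 hA2
        exact weak_duality hfeas (fun w h1 h2 => hcons w h2 h1) hA1 hA2
      rw [netOut_conserved_pair hcons hst] at hrev
      linarith
    · apply le_minCut_of_forall hst
      intro A hA1 hA2
      exact weak_duality hfeas hcons hA1 hA2
  · rintro ⟨hlow, hhigh⟩
    -- get max flows both directions
    obtain ⟨f, hffeas, hfcons, hfmax⟩ := exists_max c hc s t
    obtain ⟨g, hgfeas, hgcons, hgmax⟩ := exists_max c hc t s
    obtain ⟨A, hsA, htA, hAcut⟩ := maxflow_eq_cut hc hffeas hfcons hst hfmax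
    obtain ⟨B, htB, hsB, hBcut⟩ := maxflow_eq_cut hc hgfeas hgcons (Ne.symm hst) hgmax
    have hfub : minCut c {s} {t} ≤ netOut f s := hAcut ▸ minCut_le_cutCap hc hsA htA
    have hflb : netOut f s ≤ minCut c {s} {t} := by
      apply le_minCut_of_forall hst
      intro A' h1 h2; exact weak_duality hffeas hfcons h1 h2
    have hfeq : netOut f s = minCut c {s} {t} := le_antisymm hflb hfub
    have hgub : minCut c {t} {s} ≤ netOut g t := hBcut ▸ minCut_le_cutCap hc htB hsB
    have hglb : netOut g t ≤ minCut c {t} {s} := by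
      apply le_minCut_of_forall (Ne.symm hst)
      intro B' h1 h2; exact weak_duality hgfeas hgcons h1 h2
    have hgeq : netOut g t = minCut c {t} {s} := le_antisymm hglb hgub
    -- netOut g s = -(minCut c {t} {s})
    have hgs : netOut g s = -(minCut c {t} {s}) := by
      rw [← hgeq, netOut_conserved_pair hgcons (Ne.symm hst)]
    -- convex combination
    by_cases hdeg : netOut f s = netOut g s
    · have : F = netOut f s := le_antisymm (hfeq ▸ hhigh) (by rw [hdeg, hgs]; exact hlow)
      exact this ▸ ⟨f, hffeas, hfcons, rfl⟩
    · set θ : ℝ := (netOut f s - F) / (netOut f s - netOut g s) with hθ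
      have hd : netOut g s < netOut f s := by
        rw [hgs, hfeq]
        rcases lt_or_eq_of_le (le_trans hlow hhigh : -(minCut c {t} {s}) ≤ minCut c {s} {t}) with h | h
        · exact h
        · exfalso; apply hdeg; rw [hfeq, hgs, h]
      have hθ0 : 0 ≤ θ := by
        apply div_nonneg <;> [skip; linarith]
        rw [hfeq]; linarith
      have hθ1 : θ ≤ 1 := by
        rw [div_le_one (by linarith)]
        rw [hgs]; linarith
      refine ⟨fun a b => θ * g a b + (1 - θ) * f a b, ?_, ?_, ?_⟩
      · intro a b
        dsimp only
        have h1 := (hffeas a b); have h2 := (hgfeas a b)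
        constructor
        · have := mul_nonneg hθ0 h2.1
          have := mul_nonneg (by linarith : (0:ℝ) ≤ 1 - θ) h1.1
          linarith
        · calc θ * g a b + (1 - θ) * f a b ≤ θ * c a b + (1 - θ) * c a b := by
                have := mul_le_mul_of_nonneg_left h2.2 hθ0
                have := mul_le_mul_of_nonneg_left h1.2 (by linarith : (0:ℝ) ≤ 1 - θ)
                linarith
            _ = c a b := by ring
      · intro w h1 h2
        have : netOut (fun a b => θ * g a b + (1 - θ) * f a b) w
            = θ * netOut g w + (1 - θ) * netOut f w := by
          unfold netOut
          rw [Finset.sum_add_distrib, Finset.sum_add_distrib, ← Finset.mul_sum, ← Finset.mul_sum,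
            ← Finset.mul_sum, ← Finset.mul_sum]
          ring
        rw [this, hfcons w h1 h2, hgcons w h2 h1]
        ring
      · have : netOut (fun a b => θ * g a b + (1 - θ) * f a b) s
            = θ * netOut g s + (1 - θ) * netOut f s := by
          unfold netOut
          rw [Finset.sum_add_distrib, Finset.sum_add_distrib, ← Finset.mul_sum, ← Finset.mul_sum,
            ← Finset.mul_sum, ← Finset.mul_sum]
          ring
        rw [this]
        have hne : netOut f s - netOut g s ≠ 0 := by linarith
        have hcancel : θ * (netOut f s - netOut g s) = netOut f s - F := by
          rw [hθ, div_mul_cancel₀ _ hne]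
        have expand : θ * netOut g s + (1 - θ) * netOut f s
            = netOut f s - θ * (netOut f s - netOut g s) := by ring
        rw [expand, hcancel]
        ring
lemma netOut_add (f g : V → V → ℝ) (x : V) :
    netOut (fun a b => f a b + g a b) x = netOut f x + netOut g x := by
  unfold netOut
  rw [Finset.sum_add_distrib, Finset.sum_add_distrib]
  ring

lemma netOut_sub (f g : V → V → ℝ) (x : V) :
    netOut (fun a b => f a b - g a b) x = netOut f x - netOut g x := by
  unfold netOut
  rw [Finset.sum_sub_distrib, Finset.sum_sub_distrib]
  ring

section push
variable {V2 W : Type} [Fintype V2] [Fintype W] [DecidableEq V2] [DecidableEq W]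

/-- Push a function forward along a map `ι`. -/
def pushF (ι : V2 → W) (g : V2 → V2 → ℝ) : W → W → ℝ := fun x y =>
  ∑ w : V2, ∑ z : V2, if ι w = x ∧ ι z = y then g w z else 0

lemma pushF_apply {ι : V2 → W} (hι : Function.Injective ι) (g : V2 → V2 → ℝ) (w z : V2) :
    pushF ι g (ι w) (ι z) = g w z := by
  unfold pushF
  simp [hι.eq_iff, ite_and, Finset.sum_ite_eq']

lemma pushF_off_left {ι : V2 → W} (g : V2 → V2 → ℝ) {x : W} (hx : ∀ w, ι w ≠ x) (y : W) :
    pushF ι g x y = 0 := by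
  unfold pushF
  apply Finset.sum_eq_zero; intro w _
  apply Finset.sum_eq_zero; intro z _
  simp [hx w]

lemma pushF_off_right {ι : V2 → W} (g : V2 → V2 → ℝ) (x : W) {y : W} (hy : ∀ w, ι w ≠ y) :
    pushF ι g x y = 0 := by
  unfold pushF
  apply Finset.sum_eq_zero; intro w _
  apply Finset.sum_eq_zero; intro z _
  simp [hy z]

lemma pushF_nonneg {ι : V2 → W} {g : V2 → V2 → ℝ} (hg : ∀ w z, 0 ≤ g w z) (x y : W) :
    0 ≤ pushF ι g x y := by
  apply Finset.sum_nonneg; intro w _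
  apply Finset.sum_nonneg; intro z _
  split_ifs with h
  · exact hg w z
  · exact le_refl 0

lemma pushF_mono {ι : V2 → W} {g h : V2 → V2 → ℝ} (hgh : ∀ w z, g w z ≤ h w z) (x y : W) :
    pushF ι g x y ≤ pushF ι h x y := by
  apply Finset.sum_le_sum; intro w _
  apply Finset.sum_le_sum; intro z _
  split_ifs with h
  · exact hgh w z
  · exact le_refl 0

lemma pushF_rowsum (ι : V2 → W) (g : V2 → V2 → ℝ) (x : W) :
    (∑ y, pushF ι g x y) = ∑ w, if ι w = x then (∑ z, g w z) else 0 := by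
  unfold pushF
  rw [Finset.sum_comm]
  apply Finset.sum_congr rfl; intro w _
  rw [Finset.sum_comm]
  by_cases h : ι w = x
  · simp [h]
  · simp [h]

lemma pushF_colsum (ι : V2 → W) (g : V2 → V2 → ℝ) (y : W) :
    (∑ x, pushF ι g x y) = ∑ z, if ι z = y then (∑ w, g w z) else 0 := by
  unfold pushF
  rw [Finset.sum_comm]
  have h1 : ∀ w : V2, (∑ x, ∑ z, if ι w = x ∧ ι z = y then g w z else 0)
      = ∑ z, if ι z = y then g w z else 0 := by
    intro w
    rw [Finset.sum_comm]
    apply Finset.sum_congr rfl; intro z _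
    by_cases h : ι z = y <;> simp [h]
  calc (∑ w, ∑ x, ∑ z, if ι w = x ∧ ι z = y then g w z else 0)
      = ∑ w, ∑ z, if ι z = y then g w z else 0 :=
        Finset.sum_congr rfl fun w _ => h1 w
    _ = ∑ z, ∑ w, if ι z = y then g w z else 0 := Finset.sum_comm
    _ = ∑ z, if ι z = y then (∑ w, g w z) else 0 :=
        Finset.sum_congr rfl fun z _ => by by_cases h : ι z = y <;> simp [h]

lemma netOut_pushF {ι : V2 → W} (hι : Function.Injective ι) (g : V2 → V2 → ℝ) (w : V2) :
    netOut (pushF ι g) (ι w) = netOut g w := by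
  unfold netOut
  rw [pushF_rowsum, pushF_colsum]
  simp only [hι.eq_iff, Finset.sum_ite_eq', Finset.mem_univ, if_true]

lemma netOut_pushF_off {ι : V2 → W} (g : V2 → V2 → ℝ) {x : W} (hx : ∀ w, ι w ≠ x) :
    netOut (pushF ι g) x = 0 := by
  unfold netOut
  rw [pushF_rowsum, pushF_colsum]
  rw [Finset.sum_eq_zero, Finset.sum_eq_zero]
  · ring
  · intro z _; simp [hx z]
  · intro z _; simp [hx z]

end push

section inlExt
variable {A B : Type} [Fintype A] [Fintype B]

/-- Extend a function on `A` by zero to `A ⊕ B`. -/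
def inlExt (c : A → A → ℝ) : (A ⊕ B) → (A ⊕ B) → ℝ := fun x y =>
  match x, y with
  | Sum.inl p, Sum.inl q => c p q
  | _, _ => 0

lemma inlExt_inr_left (c : A → A → ℝ) (b : B) (y : A ⊕ B) : inlExt c (Sum.inr b) y = 0 := by
  cases y <;> rfl

lemma inlExt_inr_right (c : A → A → ℝ) (x : A ⊕ B) (b : B) : inlExt c x (Sum.inr b) = 0 := by
  cases x <;> rfl

lemma inlExt_nonneg {c : A → A → ℝ} (hc : ∀ p q, 0 ≤ c p q) (x y : A ⊕ B) :
    0 ≤ inlExt c x y := by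
  cases x <;> cases y <;> first | exact hc _ _ | exact le_refl 0

lemma netOut_inl_supported (h : (A ⊕ B) → (A ⊕ B) → ℝ)
    (h1 : ∀ b y, h (Sum.inr b) y = 0) (h2 : ∀ x b, h x (Sum.inr b) = 0) (p : A) :
    netOut h (Sum.inl p) = netOut (fun a b => h (Sum.inl a) (Sum.inl b)) p := by
  unfold netOut
  rw [Fintype.sum_sum_type, Fintype.sum_sum_type]
  simp [h1, h2]

lemma netOut_inr_supported (h : (A ⊕ B) → (A ⊕ B) → ℝ)
    (h1 : ∀ b y, h (Sum.inr b) y = 0) (h2 : ∀ x b, h x (Sum.inr b) = 0) (b : B) :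
    netOut h (Sum.inr b) = 0 := by
  unfold netOut
  simp [h1, h2]

end inlExt

section glueMapLemmas
variable {V1 V2 : Type} [DecidableEq V2] (u v : V1) (u2 v2 : V2)

lemma glueMap_injective (huv : u ≠ v) : Function.Injective (glueMap u v u2 v2) := by
  intro a b hab
  unfold glueMap at hab
  split_ifs at hab <;> simp_all

lemma glueMap_u2 : glueMap u v u2 v2 u2 = Sum.inl u := by simp [glueMap]

lemma glueMap_v2 (huv2 : u2 ≠ v2) : glueMap u v u2 v2 v2 = Sum.inl v := by
  simp [glueMap, Ne.symm huv2]

lemma glueMap_other {w : V2} (hw1 : w ≠ u2) (hw2 : w ≠ v2) :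
    glueMap u v u2 v2 w = Sum.inr ⟨w, hw1, hw2⟩ := by
  simp [glueMap, hw1, hw2]

lemma glueMap_ne_inl {p : V1} (hp1 : p ≠ u) (hp2 : p ≠ v) (w : V2) :
    glueMap u v u2 v2 w ≠ Sum.inl p := by
  unfold glueMap
  split_ifs <;> simp [Ne.symm hp1, Ne.symm hp2]

end glueMapLemmas
lemma glueCap_apply {V1 V2 : Type} [Fintype V2] [DecidableEq V1] [DecidableEq V2]
    (c1 : V1 → V1 → ℝ) (c2 : V2 → V2 → ℝ) (u v : V1) (u2 v2 : V2)
    (x y : V1 ⊕ {w : V2 // w ≠ u2 ∧ w ≠ v2}) :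
    glueCap c1 c2 u v u2 v2 x y =
      inlExt c1 x y + pushF (glueMap u v u2 v2) c2 x y := by
  cases x <;> cases y <;> rfl

lemma glue_subset {V1 V2 V2' : Type}
    [Fintype V1] [DecidableEq V1] [Fintype V2] [DecidableEq V2]
    [Fintype V2'] [DecidableEq V2']
    (c1 : V1 → V1 → ℝ) (c2 : V2 → V2 → ℝ) (c2' : V2' → V2' → ℝ)
    (h1 : ∀ u v, 0 ≤ c1 u v) (h2 : ∀ u v, 0 ≤ c2 u v) (h2' : ∀ u v, 0 ≤ c2' u v)
    (s t u v : V1) (huv : u ≠ v)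
    (u2 v2 : V2) (huv2 : u2 ≠ v2) (u2' v2' : V2') (huv2' : u2' ≠ v2')
    (hmimic1 : minCut c2 {u2} {v2} = minCut c2' {u2'} {v2'})
    (hmimic2 : minCut c2 {v2} {u2} = minCut c2' {v2'} {u2'}) :
    AchSet (glueCap c1 c2 u v u2 v2) (Sum.inl s) (Sum.inl t) ⊆
      AchSet (glueCap c1 c2' u v u2' v2') (Sum.inl s) (Sum.inl t) := by
  classical
  rintro F ⟨f, hfeas, hcons, hval⟩
  set ι := glueMap u v u2 v2 with hι
  have hιinj : Function.Injective ι := glueMap_injective u v u2 v2 huv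
  have hfle : ∀ x y, f x y ≤ inlExt c1 x y + pushF ι c2 x y := by
    intro x y
    have := (hfeas x y).2
    rwa [glueCap_apply] at this
  -- split f into the c1-part f1 and the c2-part f2
  set f1 := fun x y => min (f x y) (inlExt (B := {w : V2 // w ≠ u2 ∧ w ≠ v2}) c1 x y) with hf1
  set f2 := fun x y => f x y - f1 x y with hf2
  have hf1nn : ∀ x y, 0 ≤ f1 x y := fun x y =>
    le_min (hfeas x y).1 (inlExt_nonneg h1 x y)
  have hf1le : ∀ x y, f1 x y ≤ inlExt c1 x y := fun x y => min_le_right _ _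
  have hf2nn : ∀ x y, 0 ≤ f2 x y := fun x y => by
    simp only [hf2, sub_nonneg]; exact min_le_left _ _
  have hf2le : ∀ x y, f2 x y ≤ pushF ι c2 x y := by
    intro x y
    rcases le_total (f x y) (inlExt c1 x y) with h | h
    · simp only [hf2, hf1, min_eq_left h, sub_self]
      exact pushF_nonneg h2 x y
    · simp only [hf2, hf1, min_eq_right h]
      have := hfle x y
      linarith
  have hf1inrL : ∀ b y, f1 (Sum.inr b) y = 0 := fun b y => by
    simp only [hf1, inlExt_inr_left]
    exact min_eq_right (hfeas _ _).1
  have hf1inrR : ∀ x b, f1 x (Sum.inr b) = 0 := fun x b => by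
    simp only [hf1, inlExt_inr_right]
    exact min_eq_right (hfeas _ _).1
  -- pull f2 back to V2
  set g2 := fun w z => f2 (ι w) (ι z) with hg2
  have hg2feas : Feasible c2 g2 := by
    intro w z
    refine ⟨hf2nn _ _, ?_⟩
    have := hf2le (ι w) (ι z)
    rwa [pushF_apply hιinj] at this
  have hf2push : f2 = pushF ι g2 := by
    funext x y
    by_cases hx : ∃ w, ι w = x
    · by_cases hy : ∃ z, ι z = y
      · obtain ⟨w, rfl⟩ := hx
        obtain ⟨z, rfl⟩ := hy
        rw [pushF_apply hιinj]
      · push_neg at hy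
        rw [pushF_off_right _ _ hy]
        have := hf2le x y
        rw [pushF_off_right _ _ hy] at this
        linarith [hf2nn x y]
    · push_neg at hx
      rw [pushF_off_left _ hx]
      have := hf2le x y
      rw [pushF_off_left _ hx] at this
      linarith [hf2nn x y]
  have hnetf2 : ∀ x, netOut f2 x = netOut f x - netOut f1 x := fun x => netOut_sub f f1 x
  -- conservation of g2 away from u2, v2
  have hg2cons : Conserves g2 u2 v2 := by
    intro w hw1 hw2
    have hiw : ι w = Sum.inr ⟨w, hw1, hw2⟩ := glueMap_other u v u2 v2 hw1 hw2
    have e1 : netOut g2 w = netOut f2 (ι w) := by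
      rw [hf2push, netOut_pushF hιinj]
    rw [e1, hiw, hnetf2]
    have e2 : netOut f (Sum.inr ⟨w, hw1, hw2⟩) = 0 :=
      hcons _ (by simp) (by simp)
    have e3 : netOut f1 (Sum.inr ⟨w, hw1, hw2⟩) = 0 :=
      netOut_inr_supported f1 hf1inrL hf1inrR _
    rw [e2, e3]; ring
  set α := netOut g2 u2 with hα
  have hg2v2 : netOut g2 v2 = -α := netOut_conserved_pair hg2cons huv2
  -- transfer to c2'
  have hmem : α ∈ AchSet c2 u2 v2 := ⟨g2, hg2feas, hg2cons, rfl⟩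
  rw [AchSet_eq_Icc h2 huv2, hmimic1, hmimic2, ← AchSet_eq_Icc h2' huv2'] at hmem
  obtain ⟨g2', hg2'feas, hg2'cons, hg2'val⟩ := hmem
  have hg2'v2 : netOut g2' v2' = -α := by
    rw [netOut_conserved_pair hg2'cons huv2', hg2'val]
  -- build the new flow
  set ι' := glueMap u v u2' v2' with hι'
  have hι'inj : Function.Injective ι' := glueMap_injective u v u2' v2' huv
  set f1' : (V1 ⊕ {w : V2' // w ≠ u2' ∧ w ≠ v2'}) → (V1 ⊕ {w : V2' // w ≠ u2' ∧ w ≠ v2'}) → ℝ :=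
    inlExt (fun p q => f1 (Sum.inl p) (Sum.inl q)) with hf1'
  have hf1'inrL : ∀ b y, f1' (Sum.inr b) y = 0 := fun b y => inlExt_inr_left _ b y
  have hf1'inrR : ∀ x b, f1' x (Sum.inr b) = 0 := fun x b => inlExt_inr_right _ x b
  set f' := fun x y => f1' x y + pushF ι' g2' x y with hf'
  have hkey : ∀ p : V1, netOut f' (Sum.inl p) = netOut f (Sum.inl p) := by
      intro p
      have ha : netOut f' (Sum.inl p) =
          netOut f1' (Sum.inl p) + netOut (pushF ι' g2') (Sum.inl p) :=
        netOut_add f1' (pushF ι' g2') _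
      have hb : netOut f1' (Sum.inl p) = netOut f1 (Sum.inl p) := by
        rw [netOut_inl_supported f1' hf1'inrL hf1'inrR,
          netOut_inl_supported f1 hf1inrL hf1inrR]
        rfl
      have hc : netOut f (Sum.inl p) = netOut f1 (Sum.inl p) + netOut f2 (Sum.inl p) := by
        rw [hnetf2]; ring
      have eu : (Sum.inl u : V1 ⊕ {w : V2 // w ≠ u2 ∧ w ≠ v2}) = ι u2 := by
        rw [hι]; exact (glueMap_u2 u v u2 v2).symm
      have ev : (Sum.inl v : V1 ⊕ {w : V2 // w ≠ u2 ∧ w ≠ v2}) = ι v2 := by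
        rw [hι]; exact (glueMap_v2 u v u2 v2 huv2).symm
      have eu' : (Sum.inl u : V1 ⊕ {w : V2' // w ≠ u2' ∧ w ≠ v2'}) = ι' u2' := by
        rw [hι']; exact (glueMap_u2 u v u2' v2').symm
      have ev' : (Sum.inl v : V1 ⊕ {w : V2' // w ≠ u2' ∧ w ≠ v2'}) = ι' v2' := by
        rw [hι']; exact (glueMap_v2 u v u2' v2' huv2').symm
      have hd : netOut (pushF ι' g2') (Sum.inl p) = netOut f2 (Sum.inl p) := by
        by_cases hp : p = u
        · rw [hp, hf2push, eu, eu', netOut_pushF hι'inj, netOut_pushF hιinj, hg2'val, hα]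
        · by_cases hq : p = v
          · rw [hq, hf2push, ev, ev', netOut_pushF hι'inj, netOut_pushF hιinj, hg2'v2, hg2v2]
          · rw [netOut_pushF_off _ (fun w => hι' ▸ glueMap_ne_inl u v u2' v2' hp hq w)]
            rw [hf2push, netOut_pushF_off _ (fun w => hι ▸ glueMap_ne_inl u v u2 v2 hp hq w)]
      rw [ha, hb, hd, ← hc]
  refine ⟨f', ?_, ?_, ?_⟩
  · -- feasibility
    intro x y
    rw [glueCap_apply]
    constructor
    · have := pushF_nonneg (ι := ι') (fun w z => (hg2'feas w z).1) x y
      have hnn : 0 ≤ f1' x y := by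
        cases x <;> cases y <;> first | exact hf1nn _ _ | exact le_refl 0
      simp only [hf']
      linarith
    · have hle1 : f1' x y ≤ inlExt c1 x y := by
        cases x <;> cases y <;> first | exact hf1le _ _ | exact le_refl 0
      have hle2 : pushF ι' g2' x y ≤ pushF ι' c2' x y :=
        pushF_mono (fun w z => (hg2'feas w z).2) x y
      simp only [hf']
      linarith
  · -- conservation
    intro w hw1 hw2
    cases w with
    | inl p =>
        rw [hkey p]
        have hp1 : p ≠ s := fun h => hw1 (h ▸ rfl)
        have hp2 : p ≠ t := fun h => hw2 (h ▸ rfl)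
        exact hcons _ (fun h => hp1 (Sum.inl.inj h)) (fun h => hp2 (Sum.inl.inj h))
    | inr b =>
        have ha : netOut f' (Sum.inr b) =
            netOut f1' (Sum.inr b) + netOut (pushF ι' g2') (Sum.inr b) :=
          netOut_add f1' (pushF ι' g2') _
        have hb : netOut f1' (Sum.inr b) = 0 :=
          netOut_inr_supported f1' hf1'inrL hf1'inrR b
        have hc : netOut (pushF ι' g2') (Sum.inr b) = 0 := by
          have : ι' b.val = Sum.inr b := by
            rw [hι', glueMap_other u v u2' v2' b.prop.1 b.prop.2]
          rw [← this, netOut_pushF hι'inj]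
          exact hg2'cons _ b.prop.1 b.prop.2
        rw [ha, hb, hc]; ring
  · -- value
    rw [hkey s]; exact hval

end MFMC

theorem stmt10 {V1 V2 V2' : Type}
    [Fintype V1] [DecidableEq V1] [Fintype V2] [DecidableEq V2]
    [Fintype V2'] [DecidableEq V2']
    (c1 : V1 → V1 → ℝ) (c2 : V2 → V2 → ℝ) (c2' : V2' → V2' → ℝ)
    (h1 : ∀ u v, 0 ≤ c1 u v) (h2 : ∀ u v, 0 ≤ c2 u v) (h2' : ∀ u v, 0 ≤ c2' u v)
    (s t u v : V1) (huv : u ≠ v)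
    (u2 v2 : V2) (huv2 : u2 ≠ v2) (u2' v2' : V2') (huv2' : u2' ≠ v2')
    (hmimic1 : minCut c2 {u2} {v2} = minCut c2' {u2'} {v2'})
    (hmimic2 : minCut c2 {v2} {u2} = minCut c2' {v2'} {u2'}) :
    maxFlowVal (glueCap c1 c2 u v u2 v2) (Sum.inl s) (Sum.inl t) =
      maxFlowVal (glueCap c1 c2' u v u2' v2') (Sum.inl s) (Sum.inl t) := by
  have hsub1 := MFMC.glue_subset c1 c2 c2' h1 h2 h2' s t u v huv u2 v2 huv2 u2' v2' huv2'
    hmimic1 hmimic2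
  have hsub2 := MFMC.glue_subset c1 c2' c2 h1 h2' h2 s t u v huv u2' v2' huv2' u2 v2 huv2
    hmimic1.symm hmimic2.symm
  show sSup (MFMC.AchSet (glueCap c1 c2 u v u2 v2) (Sum.inl s) (Sum.inl t))
      = sSup (MFMC.AchSet (glueCap c1 c2' u v u2' v2') (Sum.inl s) (Sum.inl t))
  exact congrArg sSup (Set.Subset.antisymm hsub1 hsub2)
end

section
/- For any finite directed flow network G with k terminals, there exists a flow network H with at most 2^(2^k − 2) vertices, containing the same k terminals, such that for every partition of the terminal set into two nonempty parts S and T, the minimum cut value (S ↛ T) in H equals that in G; consequently H realizes exactly the same external flows as G. -/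
open Finset

set_option linter.unusedSectionVars false

section Basic
variable {V : Type} [Fintype V] [DecidableEq V]

set_option linter.unusedSectionVars false in
lemma sum_netOut (f : V → V → ℝ) : ∑ v, netOut f v = 0 := by
  unfold netOut
  rw [Finset.sum_sub_distrib, Finset.sum_comm (f := fun v w => f w v)]
  ring

lemma sum_netOut_eq (f : V → V → ℝ) (A : Finset V) :
    ∑ u ∈ A, netOut f u = ∑ u ∈ A, ∑ v ∈ Aᶜ, (f u v - f v u) := by
  have h : ∀ u, netOut f u =
      ((∑ v ∈ A, f u v) + ∑ v ∈ Aᶜ, f u v) - ((∑ v ∈ A, f v u) + ∑ v ∈ Aᶜ, f v u) := by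
    intro u; unfold netOut
    rw [Finset.sum_add_sum_compl, Finset.sum_add_sum_compl]
  calc ∑ u ∈ A, netOut f u
      = ((∑ u ∈ A, ∑ v ∈ A, f u v) - ∑ u ∈ A, ∑ v ∈ A, f v u)
        + ((∑ u ∈ A, ∑ v ∈ Aᶜ, f u v) - ∑ u ∈ A, ∑ v ∈ Aᶜ, f v u) := by
        simp only [h, Finset.sum_add_distrib, Finset.sum_sub_distrib]; ring
    _ = (∑ u ∈ A, ∑ v ∈ Aᶜ, f u v) - ∑ u ∈ A, ∑ v ∈ Aᶜ, f v u := by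
        rw [Finset.sum_comm (f := fun u v => f v u)]; ring
    _ = ∑ u ∈ A, ∑ v ∈ Aᶜ, (f u v - f v u) := by
        rw [← Finset.sum_sub_distrib]; exact Finset.sum_congr rfl fun u _ => by
          rw [Finset.sum_sub_distrib]

lemma sum_netOut_le_cutCap (c f : V → V → ℝ)
    (hf : ∀ u v, 0 ≤ f u v ∧ f u v ≤ c u v) (A : Finset V) :
    ∑ u ∈ A, netOut f u ≤ cutCap c A := by
  rw [sum_netOut_eq]
  refine Finset.sum_le_sum fun u _ => Finset.sum_le_sum fun v _ => ?_
  have h1 := (hf u v).2; have h2 := (hf v u).1; linarith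

lemma cutCap_nonneg (c : V → V → ℝ) (hc : ∀ u v, 0 ≤ c u v) (A : Finset V) :
    0 ≤ cutCap c A :=
  Finset.sum_nonneg fun u _ => Finset.sum_nonneg fun v _ => hc u v

lemma cutCap_eq_ite (c : V → V → ℝ) (A : Finset V) :
    cutCap c A = ∑ u, ∑ v, if u ∈ A ∧ v ∉ A then c u v else 0 := by
  unfold cutCap
  rw [← Finset.sum_filter_add_sum_filter_not Finset.univ (· ∈ A)
    (fun u => ∑ v, if u ∈ A ∧ v ∉ A then c u v else 0)]
  have h1 : ∀ u ∈ Finset.univ.filter (· ∈ A), (∑ v, if u ∈ A ∧ v ∉ A then c u v else 0)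
      = ∑ v ∈ Aᶜ, c u v := by
    intro u hu
    simp only [Finset.mem_filter] at hu
    rw [← Finset.sum_filter_add_sum_filter_not Finset.univ (· ∉ A)
      (fun v => if u ∈ A ∧ v ∉ A then c u v else 0)]
    have : ∀ v ∈ Finset.univ.filter (fun v => ¬ v ∉ A), (if u ∈ A ∧ v ∉ A then c u v else 0) = 0 := by
      intro v hv; simp only [Finset.mem_filter] at hv; simp [hv.2]
    rw [Finset.sum_eq_zero this, add_zero]
    have he : Finset.univ.filter (· ∉ A) = Aᶜ := by ext v; simp
    rw [he]
    exact Finset.sum_congr rfl fun v hv => by simp [Finset.mem_compl.mp hv, hu.2]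
  have h2 : ∀ u ∈ Finset.univ.filter (fun u => ¬ u ∈ A),
      (∑ v, if u ∈ A ∧ v ∉ A then c u v else 0) = 0 := by
    intro u hu; simp only [Finset.mem_filter] at hu
    exact Finset.sum_eq_zero fun v _ => by simp [hu.2]
  rw [Finset.sum_congr rfl h1, Finset.sum_eq_zero h2, add_zero]
  have he : Finset.univ.filter (· ∈ A) = A := by ext v; simp
  rw [he]


section Aug
variable {V : Type} [Fintype V] [DecidableEq V]

def resStep (c f : V → V → ℝ) (u v : V) : Prop := f u v < c u v ∨ 0 < f v u

lemma netOut_addEdge (f : V → V → ℝ) (a b : V) (δ : ℝ) (u : V) :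
    netOut (fun x y => f x y + if x = a ∧ y = b then δ else 0) u
      = netOut f u + (if u = a then δ else 0) - (if u = b then δ else 0) := by
  unfold netOut
  simp only [Finset.sum_add_distrib]
  have h1 : (∑ w, if u = a ∧ w = b then δ else 0) = if u = a then δ else 0 := by
    by_cases h : u = a <;> simp [h]
  have h2 : (∑ w, if w = a ∧ u = b then δ else 0) = if u = b then δ else 0 := by
    by_cases h : u = b <;> simp [h]
  rw [h1, h2]; ring

lemma augment_aux (c f : V → V → ℝ) (hf : ∀ u v, 0 ≤ f u v ∧ f u v ≤ c u v) (s : V) :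
    ∀ v, Relation.ReflTransGen (resStep c f) s v →
    ∀ ε : ℝ, 0 < ε → ∃ δ : ℝ, ∃ f' : V → V → ℝ, 0 < δ ∧ δ ≤ ε ∧
      (∀ u w, 0 ≤ f' u w ∧ f' u w ≤ c u w) ∧
      (∀ u w, |f' u w - f u w| ≤ ε) ∧
      (∀ u, netOut f' u = netOut f u + (if u = s then δ else 0) - (if u = v then δ else 0)) := by
  intro v h
  induction h with
  | refl =>
    intro ε hε
    exact ⟨ε, f, hε, le_refl _, hf, fun u w => by simp [le_of_lt hε],
      fun u => by ring⟩
  | @tail b v hsb hbv ih =>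
    intro ε hε
    have hnegite : ∀ (P : Prop) (inst : Decidable P) (δ : ℝ),
        (if P then -δ else 0) = -(if P then δ else 0) := by
      intro P inst δ; split <;> simp
    rcases hbv with hlt | hpos
    · -- push forward along (b, v)
      set σ := c b v - f b v with hσdef
      have hσ : 0 < σ := by simp only [hσdef]; linarith
      obtain ⟨δ, f', hδ, hδle, hf', hnear, hno⟩ := ih (min (ε/2) (σ/2)) (by positivity)
      have hmε : min (ε/2) (σ/2) ≤ ε/2 := min_le_left _ _
      have hmσ : min (ε/2) (σ/2) ≤ σ/2 := min_le_right _ _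
      refine ⟨δ, fun x y => f' x y + if x = b ∧ y = v then δ else 0, hδ, ?_, ?_, ?_, ?_⟩
      · linarith [le_trans hδle hmε]
      · intro u w
        dsimp only
        by_cases h : u = b ∧ w = v
        · rw [h.1, h.2, if_pos (show b = b ∧ v = v from ⟨rfl, rfl⟩)]
          have h1 := abs_le.mp (hnear b v)
          have h0 := (hf' b v).1
          constructor
          · linarith
          · have e1 : f' b v - f b v ≤ σ/2 := le_trans h1.2 hmσ
            have e2 : δ ≤ σ/2 := le_trans hδle hmσ
            linarith [hσdef]
        · rw [if_neg h, add_zero]; exact hf' u w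
      · intro u w
        dsimp only
        by_cases h : u = b ∧ w = v
        · rw [h.1, h.2, if_pos (show b = b ∧ v = v from ⟨rfl, rfl⟩)]
          have h1 := abs_le.mp (hnear b v)
          have e2 : δ ≤ ε/2 := le_trans hδle hmε
          rw [abs_le]
          constructor
          · linarith [h1.1, neg_le_neg hmε]
          · linarith [le_trans h1.2 hmε]
        · rw [if_neg h, add_zero]
          exact le_trans (hnear u w) (by linarith)
      · intro u
        rw [netOut_addEdge, hno u]; ring
    · -- reduce flow on (v, b)
      set σ := f v b with hσdef
      have hσ : 0 < σ := hpos
      obtain ⟨δ, f', hδ, hδle, hf', hnear, hno⟩ := ih (min (ε/2) (σ/2)) (by positivity)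
      have hmε : min (ε/2) (σ/2) ≤ ε/2 := min_le_left _ _
      have hmσ : min (ε/2) (σ/2) ≤ σ/2 := min_le_right _ _
      refine ⟨δ, fun x y => f' x y + if x = v ∧ y = b then -δ else 0, hδ, ?_, ?_, ?_, ?_⟩
      · linarith [le_trans hδle hmε]
      · intro u w
        dsimp only
        by_cases h : u = v ∧ w = b
        · rw [h.1, h.2, if_pos (show v = v ∧ b = b from ⟨rfl, rfl⟩)]
          have h1 := abs_le.mp (hnear v b)
          have e1 : -(σ/2) ≤ f' v b - f v b := le_trans (neg_le_neg hmσ) h1.1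
          have e2 : δ ≤ σ/2 := le_trans hδle hmσ
          constructor
          · linarith [hσdef]
          · have := (hf' v b).2; linarith
        · rw [if_neg h, add_zero]; exact hf' u w
      · intro u w
        dsimp only
        by_cases h : u = v ∧ w = b
        · rw [h.1, h.2, if_pos (show v = v ∧ b = b from ⟨rfl, rfl⟩)]
          have h1 := abs_le.mp (hnear v b)
          have e2 : δ ≤ ε/2 := le_trans hδle hmε
          rw [abs_le]
          constructor
          · linarith [le_trans (neg_le_neg hmε) h1.1]
          · linarith [le_trans h1.2 hmε]
        · rw [if_neg h, add_zero]
          exact le_trans (hnear u w) (by linarith)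
      · intro u
        rw [netOut_addEdge, hno u, hnegite _ _ δ, hnegite _ _ δ]; ring

end Aug

section MaxFlow
variable {V : Type} [Fintype V] [DecidableEq V]

lemma exists_flow_of_cuts (c : V → V → ℝ) (hc : ∀ u v, 0 ≤ c u v) (s t : V) (hst : s ≠ t)
    (F : ℝ) (hcut : ∀ A : Finset V, s ∈ A → t ∉ A → F ≤ cutCap c A) :
    ∃ f : V → V → ℝ, (∀ u v, 0 ≤ f u v ∧ f u v ≤ c u v) ∧
      (∀ v, v ≠ s → v ≠ t → netOut f v = 0) ∧ F ≤ netOut f s := by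
  classical
  set K : Set (V → V → ℝ) :=
    {f | (∀ u v, 0 ≤ f u v ∧ f u v ≤ c u v) ∧ ∀ v, v ≠ s → v ≠ t → netOut f v = 0} with hK
  have hcont : ∀ v : V, Continuous (fun f : V → V → ℝ => netOut f v) := by
    intro v
    unfold netOut
    apply Continuous.sub <;>
      exact continuous_finset_sum _ fun w _ => (continuous_apply _).comp (continuous_apply _)
  have hK1eq : {f : V → V → ℝ | ∀ u v, 0 ≤ f u v ∧ f u v ≤ c u v} =
      Set.pi Set.univ fun u : V => Set.pi Set.univ fun v : V => Set.Icc (0:ℝ) (c u v) := by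
    ext f; simp only [Set.mem_setOf_eq, Set.mem_pi, Set.mem_univ, Set.mem_Icc, true_implies]
  have hK2closed : IsClosed {f : V → V → ℝ | ∀ v, v ≠ s → v ≠ t → netOut f v = 0} := by
    have he : {f : V → V → ℝ | ∀ v, v ≠ s → v ≠ t → netOut f v = 0} =
        ⋂ v ∈ {v : V | v ≠ s ∧ v ≠ t}, {f | netOut f v = 0} := by
      ext f
      simp only [Set.mem_setOf_eq, Set.mem_iInter]
      constructor
      · intro h v hv; exact h v hv.1 hv.2
      · intro h v h1 h2; exact h v ⟨h1, h2⟩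
    rw [he]
    exact isClosed_biInter fun v _ => isClosed_eq (hcont v) continuous_const
  have hKc : IsCompact K := by
    have h1 : IsCompact (Set.pi Set.univ fun u : V =>
        Set.pi Set.univ fun v : V => Set.Icc (0:ℝ) (c u v)) :=
      isCompact_univ_pi fun u => isCompact_univ_pi fun v => isCompact_Icc
    apply IsCompact.of_isClosed_subset h1
    · have : K = {f : V → V → ℝ | ∀ u v, 0 ≤ f u v ∧ f u v ≤ c u v} ∩
          {f : V → V → ℝ | ∀ v, v ≠ s → v ≠ t → netOut f v = 0} := rfl
      rw [this, hK1eq]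
      exact IsClosed.inter (isClosed_set_pi fun u _ =>
        isClosed_set_pi fun v _ => isClosed_Icc) hK2closed
    · intro f hf
      rw [← hK1eq]
      exact hf.1
  have hKne : K.Nonempty := by
    refine ⟨fun _ _ => 0, fun u v => ⟨le_refl _, hc u v⟩, fun v _ _ => ?_⟩
    simp [netOut]
  obtain ⟨f, hfK, hmax⟩ := hKc.exists_isMaxOn hKne (hcont s).continuousOn
  set A : Finset V := Finset.univ.filter (fun v => Relation.ReflTransGen (resStep c f) s v)
    with hA
  have hsA : s ∈ A := by
    rw [hA]; simp only [Finset.mem_filter, Finset.mem_univ, true_and]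
    exact Relation.ReflTransGen.refl
  have htA : t ∉ A := by
    intro ht
    rw [hA] at ht; simp only [Finset.mem_filter, Finset.mem_univ, true_and] at ht
    obtain ⟨δ, f', hδ, _, hf', _, hno⟩ := augment_aux c f hfK.1 s t ht 1 one_pos
    have hf'K : f' ∈ K := by
      refine ⟨hf', fun v h1 h2 => ?_⟩
      rw [hno v, if_neg h1, if_neg h2, hfK.2 v h1 h2]; ring
    have : netOut f' s ≤ netOut f s := hmax hf'K
    rw [hno s, if_pos rfl, if_neg hst] at this
    linarith
  have hsat : ∀ u ∈ A, ∀ v, v ∉ A → f u v = c u v ∧ f v u = 0 := by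
    intro u hu v hv
    have hstep : ¬ resStep c f u v := by
      intro hstep
      apply hv
      rw [hA] at hu ⊢
      simp only [Finset.mem_filter, Finset.mem_univ, true_and] at hu ⊢
      exact hu.tail hstep
    rw [resStep] at hstep
    push_neg at hstep
    exact ⟨le_antisymm (hfK.1 u v).2 hstep.1, le_antisymm hstep.2 (hfK.1 v u).1⟩
  have hval : ∑ u ∈ A, netOut f u = netOut f s := by
    refine Finset.sum_eq_single_of_mem s hsA fun u hu hus => ?_
    exact hfK.2 u hus (by rintro rfl; exact htA hu)
  have hcutval : cutCap c A = ∑ u ∈ A, netOut f u := by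
    rw [sum_netOut_eq]
    unfold cutCap
    refine Finset.sum_congr rfl fun u hu => Finset.sum_congr rfl fun v hv => ?_
    obtain ⟨h1, h2⟩ := hsat u hu v (Finset.mem_compl.mp hv)
    rw [h1, h2]; ring
  refine ⟨f, hfK.1, hfK.2, ?_⟩
  calc F ≤ cutCap c A := hcut A hsA htA
    _ = netOut f s := by rw [hcutval, hval]

section Gale
variable {V : Type} [Fintype V] [DecidableEq V]

def auxCap (c : V → V → ℝ) (y : V → ℝ) : Option (Option V) → Option (Option V) → ℝ
  | none, some (some v) => max (y v) 0
  | some (some v), some none => max (-(y v)) 0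
  | some (some u), some (some v) => c u v
  | _, _ => 0

lemma auxCap_to_none (c : V → V → ℝ) (y : V → ℝ) (r : Option (Option V)) :
    auxCap c y r none = 0 := by rcases r with _ | (_ | v) <;> rfl

lemma auxCap_from_sn (c : V → V → ℝ) (y : V → ℝ) (r : Option (Option V)) :
    auxCap c y (some none) r = 0 := by rcases r with _ | (_ | v) <;> rfl

lemma auxCap_none_sn (c : V → V → ℝ) (y : V → ℝ) : auxCap c y none (some none) = 0 := rfl

lemma auxCap_s_edge (c : V → V → ℝ) (y : V → ℝ) (v : V) :
    auxCap c y none (some (some v)) = max (y v) 0 := rfl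

lemma auxCap_t_edge (c : V → V → ℝ) (y : V → ℝ) (v : V) :
    auxCap c y (some (some v)) (some none) = max (-(y v)) 0 := rfl

lemma auxCap_mid (c : V → V → ℝ) (y : V → ℝ) (u v : V) :
    auxCap c y (some (some u)) (some (some v)) = c u v := rfl

lemma auxCap_nonneg (c : V → V → ℝ) (hc : ∀ u v, 0 ≤ c u v) (y : V → ℝ) :
    ∀ p r, 0 ≤ auxCap c y p r := by
  intro p r
  rcases p with _ | (_ | u) <;> rcases r with _ | (_ | v) <;>
    simp [auxCap, le_max_right, hc]

lemma sum_ite_mem' (A : Finset V) (g : V → ℝ) :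
    (∑ v, if v ∈ A then g v else 0) = ∑ v ∈ A, g v := by
  rw [Finset.sum_ite_mem, Finset.univ_inter]

lemma sum_ite_not_mem (A : Finset V) (g : V → ℝ) :
    (∑ v, if v ∉ A then g v else 0) = ∑ v ∈ Aᶜ, g v := by
  rw [show (fun v => if v ∉ A then g v else 0) = fun v => if v ∈ Aᶜ then g v else 0 by
    funext v; simp [Finset.mem_compl]]
  rw [Finset.sum_ite_mem, Finset.univ_inter]

lemma gale (c : V → V → ℝ) (hc : ∀ u v, 0 ≤ c u v) (y : V → ℝ) (hy0 : ∑ v, y v = 0)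
    (hcut : ∀ A : Finset V, ∑ v ∈ A, y v ≤ cutCap c A) :
    ∃ f : V → V → ℝ, (∀ u v, 0 ≤ f u v ∧ f u v ≤ c u v) ∧ ∀ v, netOut f v = y v := by
  classical
  set X : ℝ := ∑ v, max (y v) 0 with hX
  have hXeq : X = ∑ v, max (-(y v)) 0 := by
    have : ∑ v, (max (y v) 0 - max (-(y v)) 0) = 0 := by
      simp only [max_zero_sub_eq_self]; exact hy0
    rw [Finset.sum_sub_distrib] at this
    linarith [this]
  -- the cut bound in the augmented network
  have hcut' : ∀ B : Finset (Option (Option V)), none ∈ B → some none ∉ B →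
      X ≤ cutCap (auxCap c y) B := by
    intro B hsB htB
    set A : Finset V := Finset.univ.filter (fun v => some (some v) ∈ B) with hA
    have hmemA : ∀ v : V, v ∈ A ↔ some (some v) ∈ B := by
      intro v; rw [hA]; simp
    have hcompute : cutCap (auxCap c y) B =
        (∑ v ∈ Aᶜ, max (y v) 0) + ((∑ v ∈ A, max (-(y v)) 0) + cutCap c A) := by
      rw [cutCap_eq_ite]
      simp only [Fintype.sum_option, auxCap_to_none, auxCap_from_sn, auxCap_none_sn,
        auxCap_s_edge, auxCap_t_edge, auxCap_mid, ite_self, hsB, htB, true_and, and_true,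
        not_false_iff, zero_add, add_zero, Finset.sum_const_zero]
      simp only [← hmemA]
      rw [sum_ite_not_mem, Finset.sum_add_distrib, sum_ite_mem', ← cutCap_eq_ite]
    rw [hcompute]
    have hsplit : X = (∑ v ∈ A, max (y v) 0) + ∑ v ∈ Aᶜ, max (y v) 0 := by
      rw [hX, Finset.sum_add_sum_compl]
    have hyA : ∑ v ∈ A, y v ≤ cutCap c A := hcut A
    have hAeq : ∑ v ∈ A, y v = (∑ v ∈ A, max (y v) 0) - ∑ v ∈ A, max (-(y v)) 0 := by
      rw [← Finset.sum_sub_distrib]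
      exact (Finset.sum_congr rfl fun v _ => (max_zero_sub_eq_self (y v)).symm)
    linarith
  obtain ⟨f, hfeas, hcons, hge⟩ := exists_flow_of_cuts (auxCap c y)
    (auxCap_nonneg c hc y) none (some none) (by simp) X hcut'
  -- forced zero entries
  have hzn : ∀ r, f r none = 0 := fun r =>
    le_antisymm (by rw [← auxCap_to_none c y r]; exact (hfeas r none).2) (hfeas r none).1
  have hzsn : ∀ r, f (some none) r = 0 := fun r =>
    le_antisymm (by rw [← auxCap_from_sn c y r]; exact (hfeas (some none) r).2)
      (hfeas (some none) r).1
  -- net out at source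
  have hz3 : f none (some none) = 0 :=
    le_antisymm (by rw [← auxCap_none_sn c y]; exact (hfeas none (some none)).2)
      (hfeas none (some none)).1
  have hnoutS : netOut f none = ∑ v, f none (some (some v)) := by
    unfold netOut
    simp only [Fintype.sum_option]
    simp [hzn, hzsn, hz3]
  have hle : ∀ v, f none (some (some v)) ≤ max (y v) 0 := fun v => (hfeas none (some (some v))).2
  have hXle : ∑ v, f none (some (some v)) ≤ X := Finset.sum_le_sum fun v _ => hle v
  have hSeq : ∑ v, f none (some (some v)) = X := le_antisymm hXle (by rw [← hnoutS]; exact hge)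
  have hsatS : ∀ v, f none (some (some v)) = max (y v) 0 := by
    have := (Finset.sum_eq_sum_iff_of_le (fun v _ => hle v)).mp (by rw [hSeq, hX])
    exact fun v => this v (Finset.mem_univ v)
  -- net out at sink
  have htotal : ∑ p, netOut f p = 0 := sum_netOut f
  have hconsV : ∀ v : V, netOut f (some (some v)) = 0 := fun v =>
    hcons (some (some v)) (by simp) (by simp)
  have hnoutT : netOut f (some none) = -(∑ v, f (some (some v)) (some none)) := by
    unfold netOut
    simp only [Fintype.sum_option]
    simp [hzn, hzsn, hz3]
  have hTX : ∑ v, f (some (some v)) (some none) = X := by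
    have h1 : netOut f none + (netOut f (some none) + ∑ v, netOut f (some (some v))) = 0 := by
      have h := htotal
      simp only [Fintype.sum_option] at h
      exact h
    rw [Finset.sum_eq_zero (fun v _ => hconsV v)] at h1
    have h2 : netOut f none = X := by rw [hnoutS, hSeq]
    rw [hnoutT] at h1
    linarith
  have hleT : ∀ v, f (some (some v)) (some none) ≤ max (-(y v)) 0 := fun v =>
    (hfeas (some (some v)) (some none)).2
  have hsatT : ∀ v, f (some (some v)) (some none) = max (-(y v)) 0 := by
    have := (Finset.sum_eq_sum_iff_of_le (fun v _ => hleT v)).mp (by rw [hTX, hXeq])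
    exact fun v => this v (Finset.mem_univ v)
  -- restrict
  refine ⟨fun u v => f (some (some u)) (some (some v)), fun u v => (hfeas _ _), fun v => ?_⟩
  have h0 := hconsV v
  unfold netOut at h0 ⊢
  dsimp only
  simp only [Fintype.sum_option] at h0
  rw [hzn, hsatT v, hsatS v, hzsn] at h0
  have := max_zero_sub_eq_self (y v)
  linarith
end Gale

section Push
variable {V : Type} [Fintype V] [DecidableEq V] {W : Type} [Fintype W] [DecidableEq W]

def pushCap (φ : V → W) (g : V → V → ℝ) : W → W → ℝ :=
  fun a b => ∑ u, ∑ v, if φ u = a ∧ φ v = b then g u v else 0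

lemma pushCap_nonneg (φ : V → W) (g : V → V → ℝ) (hg : ∀ u v, 0 ≤ g u v) (a b : W) :
    0 ≤ pushCap φ g a b :=
  Finset.sum_nonneg fun u _ => Finset.sum_nonneg fun v _ => by
    split
    · exact hg u v
    · exact le_refl 0

lemma pushCap_mono (φ : V → W) (g h : V → V → ℝ) (hgh : ∀ u v, g u v ≤ h u v) (a b : W) :
    pushCap φ g a b ≤ pushCap φ h a b :=
  Finset.sum_le_sum fun u _ => Finset.sum_le_sum fun v _ => by
    split
    · exact hgh u v
    · exact le_refl 0

lemma pushCap_netOut (φ : V → W) (g : V → V → ℝ) (a : W) :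
    netOut (pushCap φ g) a = ∑ u ∈ Finset.univ.filter (fun u => φ u = a), netOut g u := by
  unfold netOut pushCap
  rw [Finset.sum_filter]
  have h1 : (∑ b, ∑ u, ∑ v, if φ u = a ∧ φ v = b then g u v else 0)
      = ∑ u, if φ u = a then ∑ v, g u v else 0 := by
    rw [Finset.sum_comm]
    refine Finset.sum_congr rfl fun u _ => ?_
    rw [Finset.sum_comm]
    by_cases h : φ u = a
    · simp only [h, true_and]
      have e : ∀ x : V, (∑ w : W, if φ x = w then g u x else 0) = g u x := by
        intro x
        rw [Finset.sum_ite_eq Finset.univ (φ x) (fun _ => g u x)]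
        simp
      simp [e]
    · simp [h]
  have h2 : (∑ b, ∑ u, ∑ v, if φ u = b ∧ φ v = a then g u v else 0)
      = ∑ u, if φ u = a then ∑ v, g v u else 0 := by
    have swap : ∀ b : W, (∑ u, ∑ v, if φ u = b ∧ φ v = a then g u v else 0)
        = ∑ v, ∑ u, if φ u = b ∧ φ v = a then g u v else 0 := fun b => Finset.sum_comm
    rw [Finset.sum_congr rfl fun b _ => swap b, Finset.sum_comm]
    refine Finset.sum_congr rfl fun v _ => ?_
    rw [Finset.sum_comm]
    by_cases h : φ v = a
    · simp only [h, and_true]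
      have e : ∀ x : V, (∑ w : W, if φ x = w then g x v else 0) = g x v := by
        intro x
        rw [Finset.sum_ite_eq Finset.univ (φ x) (fun _ => g x v)]
        simp
      simp [e]
    · simp [h]
  rw [h1, h2, ← Finset.sum_sub_distrib]
  refine Finset.sum_congr rfl fun u _ => ?_
  by_cases h : φ u = a <;> simp [h]

lemma pushCap_cutCap (φ : V → W) (g : V → V → ℝ) (B : Finset W) :
    cutCap (pushCap φ g) B = cutCap g (Finset.univ.filter (fun v => φ v ∈ B)) := by
  have key : ∀ u v : V, (∑ a ∈ B, ∑ b ∈ Bᶜ, if φ u = a ∧ φ v = b then g u v else 0)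
      = if φ u ∈ B ∧ φ v ∈ Bᶜ then g u v else 0 := by
    intro u v
    have inner : ∀ a : W, (∑ b ∈ Bᶜ, if φ u = a ∧ φ v = b then g u v else 0)
        = if φ u = a then (if φ v ∈ Bᶜ then g u v else 0) else 0 := by
      intro a
      by_cases h : φ u = a
      · simp only [h, true_and]
        exact Finset.sum_ite_eq Bᶜ (φ v) (fun _ => g u v)
      · simp [h]
    rw [Finset.sum_congr rfl fun a _ => inner a, Finset.sum_ite_eq B (φ u)]
    by_cases h1 : φ u ∈ B <;> by_cases h2 : φ v ∈ Bᶜ <;> simp [h1, h2]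
  calc cutCap (pushCap φ g) B
      = ∑ p ∈ B ×ˢ Bᶜ, pushCap φ g p.1 p.2 := by rw [Finset.sum_product]; rfl
    _ = ∑ p ∈ B ×ˢ Bᶜ, ∑ z ∈ (Finset.univ ×ˢ Finset.univ : Finset (V × V)),
          (if φ z.1 = p.1 ∧ φ z.2 = p.2 then g z.1 z.2 else 0) := by
        refine Finset.sum_congr rfl fun p _ => ?_
        rw [Finset.sum_product]
        rfl
    _ = ∑ z ∈ (Finset.univ ×ˢ Finset.univ : Finset (V × V)), ∑ p ∈ B ×ˢ Bᶜ,
          (if φ z.1 = p.1 ∧ φ z.2 = p.2 then g z.1 z.2 else 0) := Finset.sum_comm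
    _ = ∑ z ∈ (Finset.univ ×ˢ Finset.univ : Finset (V × V)),
          (if φ z.1 ∈ B ∧ φ z.2 ∈ Bᶜ then g z.1 z.2 else 0) := by
        refine Finset.sum_congr rfl fun z _ => ?_
        rw [Finset.sum_product]
        exact key z.1 z.2
    _ = ∑ u, ∑ v, if φ u ∈ B ∧ φ v ∈ Bᶜ then g u v else 0 := by
        rw [Finset.sum_product]
    _ = cutCap g (Finset.univ.filter (fun v => φ v ∈ B)) := by
        rw [cutCap_eq_ite]
        refine Finset.sum_congr rfl fun u _ => Finset.sum_congr rfl fun v _ => ?_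
        congr 1
        simp [Finset.mem_filter, Finset.mem_compl]

end Push

section MinCut
variable {V : Type} [Fintype V] [DecidableEq V]

def cutSet (c : V → V → ℝ) (S T : Finset V) : Set ℝ :=
  {x : ℝ | ∃ A : Finset V, S ⊆ A ∧ Disjoint T A ∧ x = cutCap c A}

lemma minCut_eq_sInf (c : V → V → ℝ) (S T : Finset V) :
    minCut c S T = sInf (cutSet c S T) := rfl

lemma cutSet_finite (c : V → V → ℝ) (S T : Finset V) : (cutSet c S T).Finite :=
  Set.Finite.subset (Set.finite_range (cutCap c)) (by rintro x ⟨A, _, _, rfl⟩; exact ⟨A, rfl⟩)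

lemma minCut_le (c : V → V → ℝ) {S T A : Finset V} (h : S ⊆ A) (hd : Disjoint T A) :
    minCut c S T ≤ cutCap c A :=
  csInf_le (cutSet_finite c S T).bddBelow ⟨A, h, hd, rfl⟩

lemma le_minCut (c : V → V → ℝ) {S T : Finset V} {b : ℝ} (hne : (cutSet c S T).Nonempty)
    (h : ∀ A : Finset V, S ⊆ A → Disjoint T A → b ≤ cutCap c A) :
    b ≤ minCut c S T :=
  le_csInf hne (by rintro x ⟨A, h1, h2, rfl⟩; exact h A h1 h2)

lemma minCut_mem (c : V → V → ℝ) {S T : Finset V} (hne : (cutSet c S T).Nonempty) :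
    minCut c S T ∈ cutSet c S T :=
  hne.csInf_mem (cutSet_finite c S T)

/-- flow-cut inequality for external flows -/
lemma extFlow_le_cut {k : ℕ} (c f : V → V → ℝ) (q : Fin k → V) (hq : Function.Injective q)
    (x : Fin k → ℝ) (hf : IsExtFlow c f q x) (S : Finset (Fin k)) (A : Finset V)
    (hSA : S.image q ⊆ A) (hd : Disjoint (Sᶜ.image q) A) :
    ∑ i ∈ S, x i ≤ cutCap c A := by
  have h1 : ∑ i ∈ S, x i = ∑ u ∈ A, netOut f u := by
    calc ∑ i ∈ S, x i = ∑ i ∈ S, netOut f (q i) := by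
          exact Finset.sum_congr rfl fun i _ => (hf.2.2 i).symm
      _ = ∑ u ∈ S.image q, netOut f u := by
          rw [Finset.sum_image (fun i _ j _ h => hq h)]
      _ = ∑ u ∈ A, netOut f u := by
          refine Finset.sum_subset hSA fun u hu hnot => ?_
          refine hf.2.1 u fun i hiq => ?_
          by_cases hiS : i ∈ S
          · exact hnot (Finset.mem_image.mpr ⟨i, hiS, hiq⟩)
          · exact (Finset.disjoint_left.mp hd
              (Finset.mem_image.mpr ⟨i, Finset.mem_compl.mpr hiS, hiq⟩)) hu
  rw [h1]
  exact sum_netOut_le_cutCap c f hf.1 A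

end MinCut

theorem stmt11 {V : Type} [Fintype V] [DecidableEq V] {k : ℕ} (c : V → V → ℝ)
    (hc : ∀ u v, 0 ≤ c u v) (q : Fin k → V) (hq : Function.Injective q) :
    ∃ (W : Type) (_ : Fintype W) (_ : DecidableEq W)
      (d : W → W → ℝ) (q' : Fin k → W),
      Fintype.card W ≤ 2 ^ (2 ^ k - 2) ∧
      (∀ u v, 0 ≤ d u v) ∧ Function.Injective q' ∧
      (∀ S : Finset (Fin k), S.Nonempty → S ≠ Finset.univ →
        minCut d (S.image q') (Sᶜ.image q') = minCut c (S.image q) (Sᶜ.image q)) ∧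
      (∀ x : Fin k → ℝ, (∃ f, IsExtFlow c f q x) ↔ ∃ g, IsExtFlow d g q' x) := by
  classical
  -- disjointness of terminal images
  have hdisjSS : ∀ S : Finset (Fin k), Disjoint (Sᶜ.image q) (S.image q) := by
    intro S
    rw [Finset.disjoint_image hq]
    exact disjoint_compl_left
  have hGne : ∀ S : Finset (Fin k), (cutSet c (S.image q) (Sᶜ.image q)).Nonempty :=
    fun S => ⟨cutCap c (S.image q), S.image q, Finset.Subset.refl _, hdisjSS S, rfl⟩
  -- choose minimum cuts
  have hchoice : ∀ S : {S : Finset (Fin k) // S.Nonempty ∧ S ≠ Finset.univ},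
      ∃ A : Finset V, (S.1.image q ⊆ A ∧ Disjoint ((S.1)ᶜ.image q) A) ∧
        cutCap c A = minCut c (S.1.image q) ((S.1)ᶜ.image q) := by
    intro S
    obtain ⟨A, h1, h2, h3⟩ := minCut_mem c (hGne S.1)
    exact ⟨A, ⟨h1, h2⟩, h3.symm⟩
  choose Amin hA hAcut using hchoice
  set φ : V → ({S : Finset (Fin k) // S.Nonempty ∧ S ≠ Finset.univ} → Bool) :=
    fun v S => decide (v ∈ Amin S) with hφ
  set q' : Fin k → ({S : Finset (Fin k) // S.Nonempty ∧ S ≠ Finset.univ} → Bool) :=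
    fun i => φ (q i) with hq'def
  have hφ_true : ∀ (S : {S : Finset (Fin k) // S.Nonempty ∧ S ≠ Finset.univ}) i,
      i ∈ S.1 → φ (q i) S = true := fun S i hi =>
    decide_eq_true ((hA S).1 (Finset.mem_image.mpr ⟨i, hi, rfl⟩))
  have hφ_false : ∀ (S : {S : Finset (Fin k) // S.Nonempty ∧ S ≠ Finset.univ}) i,
      i ∉ S.1 → φ (q i) S = false := fun S i hi =>
    decide_eq_false (fun hmem => Finset.disjoint_left.mp (hA S).2
      (Finset.mem_image.mpr ⟨i, Finset.mem_compl.mpr hi, rfl⟩) hmem)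
  have hq'inj : Function.Injective q' := by
    intro i j hij
    by_contra hne
    have hSuniv : ({i} : Finset (Fin k)) ≠ Finset.univ := by
      intro h
      have : j ∈ ({i} : Finset (Fin k)) := h ▸ Finset.mem_univ j
      exact hne ((Finset.mem_singleton.mp this).symm)
    have h1 : q' i ⟨{i}, Finset.singleton_nonempty i, hSuniv⟩ = true :=
      hφ_true _ i (Finset.mem_singleton_self i)
    have h2 : q' j ⟨{i}, Finset.singleton_nonempty i, hSuniv⟩ = false :=
      hφ_false _ j (fun hj => hne ((Finset.mem_singleton.mp hj).symm))
    rw [hij, h2] at h1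
    exact Bool.false_ne_true h1
  set d := pushCap φ c with hd
  -- the minimum-cut equality
  have hMC : ∀ S : Finset (Fin k), S.Nonempty → S ≠ Finset.univ →
      minCut d (S.image q') (Sᶜ.image q') = minCut c (S.image q) (Sᶜ.image q) := by
    intro S hS1 hS2
    have hdisj' : Disjoint (Sᶜ.image q') (S.image q') := by
      rw [Finset.disjoint_image hq'inj]
      exact disjoint_compl_left
    have hHne : (cutSet d (S.image q') (Sᶜ.image q')).Nonempty :=
      ⟨cutCap d (S.image q'), S.image q', Finset.Subset.refl _, hdisj', rfl⟩
    apply le_antisymm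
    · set B : Finset ({S : Finset (Fin k) // S.Nonempty ∧ S ≠ Finset.univ} → Bool) :=
        Finset.univ.filter (fun a => a ⟨S, hS1, hS2⟩ = true) with hB
    -- the special cut B coming from Amin
      have hsub : S.image q' ⊆ B := by
        intro a ha
        obtain ⟨i, hi, rfl⟩ := Finset.mem_image.mp ha
        rw [hB]
        simp only [Finset.mem_filter, Finset.mem_univ, true_and]
        exact hφ_true ⟨S, hS1, hS2⟩ i hi
      have hdisjB : Disjoint (Sᶜ.image q') B := by
        rw [Finset.disjoint_left]
        intro a ha haB
        obtain ⟨j, hj, rfl⟩ := Finset.mem_image.mp ha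
        rw [hB] at haB
        simp only [Finset.mem_filter, Finset.mem_univ, true_and] at haB
        have hfj := hφ_false ⟨S, hS1, hS2⟩ j (Finset.mem_compl.mp hj)
        simp only [hq'def] at haB
        rw [hfj] at haB
        exact Bool.false_ne_true haB
      have hval : cutCap d B = minCut c (S.image q) (Sᶜ.image q) := by
        rw [hd, pushCap_cutCap]
        have hpre : Finset.univ.filter (fun v => φ v ∈ B) = Amin ⟨S, hS1, hS2⟩ := by
          ext v
          rw [hB]
          simp only [Finset.mem_filter, Finset.mem_univ, true_and, hφ]
          exact decide_eq_true_iff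
        rw [hpre]
        exact hAcut ⟨S, hS1, hS2⟩
      calc minCut d (S.image q') (Sᶜ.image q') ≤ cutCap d B := minCut_le d hsub hdisjB
        _ = minCut c (S.image q) (Sᶜ.image q) := hval
    · refine le_minCut d hHne fun B hsub hdisjB => ?_
      have h1 : S.image q ⊆ Finset.univ.filter (fun v => φ v ∈ B) := by
        intro a ha
        obtain ⟨i, hi, rfl⟩ := Finset.mem_image.mp ha
        simp only [Finset.mem_filter, Finset.mem_univ, true_and]
        exact hsub (Finset.mem_image.mpr ⟨i, hi, rfl⟩)
      have h2 : Disjoint (Sᶜ.image q) (Finset.univ.filter fun v => φ v ∈ B) := by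
        rw [Finset.disjoint_left]
        intro a ha hmem
        obtain ⟨j, hj, rfl⟩ := Finset.mem_image.mp ha
        simp only [Finset.mem_filter, Finset.mem_univ, true_and] at hmem
        exact Finset.disjoint_left.mp hdisjB (Finset.mem_image.mpr ⟨j, hj, rfl⟩) hmem
      calc minCut c (S.image q) (Sᶜ.image q)
          ≤ cutCap c (Finset.univ.filter fun v => φ v ∈ B) := minCut_le c h1 h2
        _ = cutCap d B := (pushCap_cutCap φ c B).symm
  -- cardinality bound
  have hcard : Fintype.card ({S : Finset (Fin k) // S.Nonempty ∧ S ≠ Finset.univ} → Bool)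
      ≤ 2 ^ (2 ^ k - 2) := by
    rw [Fintype.card_fun, Fintype.card_bool]
    refine Nat.pow_le_pow_right (by norm_num) ?_
    rw [Fintype.card_subtype]
    rcases Nat.eq_zero_or_pos k with hk | hk
    · subst hk
      have he : Finset.univ.filter
          (fun S : Finset (Fin 0) => S.Nonempty ∧ S ≠ Finset.univ) = ∅ := by
        ext S
        simp only [Finset.mem_filter, Finset.mem_univ, true_and, Finset.notMem_empty, iff_false]
        rintro ⟨h1, h2⟩
        exact h2 (Finset.eq_univ_iff_forall.mpr fun i => Fin.elim0 i)
      rw [he]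
      simp
    · haveI : Nonempty (Fin k) := ⟨⟨0, hk⟩⟩
      have hne : (∅ : Finset (Fin k)) ≠ Finset.univ := by
        intro h
        have huniv : (Finset.univ : Finset (Fin k)).Nonempty := Finset.univ_nonempty
        rw [← h] at huniv
        exact Finset.not_nonempty_empty huniv
      have hsub : Finset.univ.filter (fun S : Finset (Fin k) => S.Nonempty ∧ S ≠ Finset.univ)
          ⊆ Finset.univ \ {∅, Finset.univ} := by
        intro S hS
        simp only [Finset.mem_filter] at hS
        simp only [Finset.mem_sdiff, Finset.mem_univ, true_and, Finset.mem_insert,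
          Finset.mem_singleton]
        push_neg
        exact ⟨hS.2.1, hS.2.2⟩
      refine le_trans (Finset.card_le_card hsub) ?_
      rw [Finset.card_sdiff_of_subset (fun x _ => Finset.mem_univ x)]
      rw [Finset.card_univ, Fintype.card_finset, Fintype.card_fin]
      rw [Finset.card_insert_of_notMem (by simp [hne]), Finset.card_singleton]
  -- forward direction of flow equivalence
  have hforward : ∀ (x : Fin k → ℝ) (f : V → V → ℝ), IsExtFlow c f q x →
      IsExtFlow d (pushCap φ f) q' x := by
    intro x f hf
    refine ⟨fun a b => ⟨pushCap_nonneg φ f (fun u v => (hf.1 u v).1) a b,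
      pushCap_mono φ f c (fun u v => (hf.1 u v).2) a b⟩, ?_, ?_⟩
    · intro a ha
      rw [pushCap_netOut]
      refine Finset.sum_eq_zero fun u hu => ?_
      simp only [Finset.mem_filter, Finset.mem_univ, true_and] at hu
      refine hf.2.1 u fun i hiq => ?_
      apply ha i
      rw [hq'def]
      show φ (q i) = a
      rw [hiq, hu]
    · intro i
      rw [pushCap_netOut]
      have hmem : q i ∈ Finset.univ.filter (fun u => φ u = q' i) := by
        simp only [Finset.mem_filter, Finset.mem_univ, true_and, hq'def]
      rw [Finset.sum_eq_single_of_mem (q i) hmem ?_]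
      · exact hf.2.2 i
      · intro u hu hune
        simp only [Finset.mem_filter, Finset.mem_univ, true_and] at hu
        refine hf.2.1 u fun j hjq => ?_
        apply hune
        have : q' j = q' i := by rw [hq'def]; show φ (q j) = q' i; rw [hjq, hu]
        rw [← hjq, hq'inj this]
  -- backward direction
  have hbackward : ∀ (x : Fin k → ℝ) (g : _), IsExtFlow d g q' x →
      ∃ f, IsExtFlow c f q x := by
    intro x g hg
    set y : V → ℝ := fun v => ∑ i ∈ Finset.univ.filter (fun i => q i = v), x i with hy
    have hxsum : ∑ i, x i = 0 := by
      have h1 : ∑ i, x i = ∑ i, netOut g (q' i) :=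
        Finset.sum_congr rfl fun i _ => (hg.2.2 i).symm
      have h2 : ∑ i, netOut g (q' i) = ∑ a ∈ Finset.univ.image q', netOut g a :=
        (Finset.sum_image (fun i _ j _ h => hq'inj h)).symm
      have h3 : ∑ a ∈ Finset.univ.image q', netOut g a = ∑ a, netOut g a := by
        refine Finset.sum_subset (Finset.subset_univ _) fun a _ ha => ?_
        exact hg.2.1 a fun i hi => ha (Finset.mem_image.mpr ⟨i, Finset.mem_univ i, hi⟩)
      rw [h1, h2, h3, sum_netOut]
    have hysum : ∑ v, y v = 0 := by
      rw [hy]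
      have : ∑ v, ∑ i ∈ Finset.univ.filter (fun i => q i = v), x i = ∑ i, x i :=
        Finset.sum_fiberwise Finset.univ q x
      rw [this, hxsum]
    have hycut : ∀ A : Finset V, ∑ v ∈ A, y v ≤ cutCap c A := by
      intro A
      set S := Finset.univ.filter (fun i => q i ∈ A) with hS
      have e1 : ∑ v ∈ A, y v = ∑ i ∈ S, x i := by
        rw [hy, hS]
        calc ∑ v ∈ A, ∑ i ∈ Finset.univ.filter (fun i => q i = v), x i
            = ∑ v ∈ A, ∑ i, if q i = v then x i else 0 :=
              Finset.sum_congr rfl fun v _ => Finset.sum_filter _ _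
          _ = ∑ i, ∑ v ∈ A, if q i = v then x i else 0 := Finset.sum_comm
          _ = ∑ i, if q i ∈ A then x i else 0 :=
              Finset.sum_congr rfl fun i _ => Finset.sum_ite_eq A (q i) (fun _ => x i)
          _ = ∑ i ∈ Finset.univ.filter (fun i => q i ∈ A), x i := (Finset.sum_filter _ _).symm
      rw [e1]
      have hsubA : S.image q ⊆ A := by
        intro a ha
        obtain ⟨i, hi, rfl⟩ := Finset.mem_image.mp ha
        exact (Finset.mem_filter.mp hi).2
      have hdisjA : Disjoint (Sᶜ.image q) A := by
        rw [Finset.disjoint_left]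
        intro a ha haA
        obtain ⟨j, hj, rfl⟩ := Finset.mem_image.mp ha
        exact (Finset.mem_compl.mp hj) (Finset.mem_filter.mpr ⟨Finset.mem_univ j, haA⟩)
      by_cases hS1 : S.Nonempty
      · by_cases hS2 : S = Finset.univ
        · rw [hS2, hxsum]
          exact cutCap_nonneg c hc A
        · have step1 : ∑ i ∈ S, x i ≤ minCut d (S.image q') (Sᶜ.image q') := by
            refine le_minCut d ⟨cutCap d (S.image q'), S.image q', Finset.Subset.refl _,
              (by rw [Finset.disjoint_image hq'inj]; exact disjoint_compl_left), rfl⟩ ?_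
            intro B h1 h2
            exact extFlow_le_cut d g q' hq'inj x hg S B h1 h2
          calc ∑ i ∈ S, x i ≤ minCut d (S.image q') (Sᶜ.image q') := step1
            _ = minCut c (S.image q) (Sᶜ.image q) := hMC S hS1 hS2
            _ ≤ cutCap c A := minCut_le c hsubA hdisjA
      · rw [Finset.not_nonempty_iff_eq_empty.mp hS1, Finset.sum_empty]
        exact cutCap_nonneg c hc A
    obtain ⟨f, hfeas, hnet⟩ := gale c hc y hysum hycut
    refine ⟨f, hfeas, ?_, ?_⟩
    · intro v hv
      rw [hnet v, hy]
      show (∑ i ∈ Finset.univ.filter (fun i => q i = v), x i) = 0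
      rw [Finset.filter_false_of_mem (fun i _ => hv i), Finset.sum_empty]
    · intro i
      rw [hnet (q i), hy]
      show (∑ j ∈ Finset.univ.filter (fun j => q j = q i), x j) = x i
      have : Finset.univ.filter (fun j => q j = q i) = {i} := by
        ext j
        simp [hq.eq_iff]
      rw [this, Finset.sum_singleton]
  refine ⟨({S : Finset (Fin k) // S.Nonempty ∧ S ≠ Finset.univ} → Bool), inferInstance,
    inferInstance, d, q', hcard, fun a b => pushCap_nonneg φ c hc a b, hq'inj, hMC, ?_⟩
  intro x
  constructor
  · rintro ⟨f, hf⟩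
    exact ⟨pushCap φ f, hforward x f hf⟩
  · rintro ⟨g, hg⟩
    exact hbackward x g hg
end MaxFlow
end Basic
end
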